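/- Let n = p^{m₁} q^{m₂} where p and q are distinct primes and m₁, m₂ are positive integers, and suppose either m₁ ≥ 2 or m₂ ≥ 2, or m₁ = m₂ = 1 with p ≥ 5 and q ≥ 5. Then γ_R(Γ(ℤ_n)) = 4. -/

import Mathlib

/-- The set of nonzero zero-divisors of a commutative ring `R`. -/
def zdvSet (R : Type*) [CommRing R] : Set R :=
  {x | x ≠ 0 ∧ ∃ y, y ≠ 0 ∧ x * y = 0}

/-- The zero-divisor graph `Γ(R)`: vertices are the nonzero zero-divisors of `R`,
with distinct `x`, `y` adjacent iff `x * y = 0`. -/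
def zeroDivisorGraph (R : Type*) [CommRing R] : SimpleGraph (zdvSet R) where
  Adj a b := a ≠ b ∧ (a : R) * (b : R) = 0
  symm := by
    constructor
    rintro a b ⟨hne, hmul⟩
    exact ⟨hne.symm, by rwa [mul_comm]⟩
  loopless := by constructor; rintro a ⟨hne, _⟩; exact hne rfl

/-- A Roman dominating function: every vertex with value `0` has a neighbour
with value `2`. -/
def IsRomanDominating {V : Type*} (G : SimpleGraph V) (f : V → Fin 3) : Prop :=
  ∀ u, f u = 0 → ∃ v, G.Adj u v ∧ f v = 2

/-- The Roman domination number: the minimum weight of a (finitely supported)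
Roman dominating function. -/
noncomputable def romanDominationNumber {V : Type*} (G : SimpleGraph V) : ℕ :=
  sInf {w | ∃ f : V → Fin 3, IsRomanDominating G f ∧
    {v | f v ≠ 0}.Finite ∧ w = ∑ᶠ v, (f v : ℕ)}

set_option linter.unusedSectionVars false

section Basic
variable {n : ℕ} [NeZero n]

lemma zmod_mul_eq_zero_iff (x y : ZMod n) :
    x * y = 0 ↔ n ∣ x.val * y.val := by
  rw [← ZMod.natCast_eq_zero_iff, Nat.cast_mul,
    ZMod.natCast_zmod_val, ZMod.natCast_zmod_val]

lemma natCast_ne_zero_zmod {k : ℕ} (hk0 : 0 < k) (hkn : k < n) : (k : ZMod n) ≠ 0 := by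
  rw [Ne, ZMod.natCast_eq_zero_iff]
  exact fun h => absurd (Nat.le_of_dvd hk0 h) (not_le.2 hkn)

lemma natCast_mem_zdv {k : ℕ} (t : ℕ) (hk0 : 0 < k) (hkn : k < n)
    (ht0 : 0 < t) (htn : t < n) (hdvd : n ∣ k * t) :
    (k : ZMod n) ∈ zdvSet (ZMod n) := by
  refine ⟨natCast_ne_zero_zmod hk0 hkn, (t : ZMod n), natCast_ne_zero_zmod ht0 htn, ?_⟩
  rw [← Nat.cast_mul, ZMod.natCast_eq_zero_iff]
  exact hdvd

lemma one_lt_gcd_of_mem {v : ZMod n} (hv : v ∈ zdvSet (ZMod n)) :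
    1 < Nat.gcd v.val n := by
  obtain ⟨hv0, y, hy0, hxy⟩ := hv
  rcases Nat.lt_or_ge 1 (Nat.gcd v.val n) with h | h
  · exact h
  have hgpos : 0 < Nat.gcd v.val n := Nat.gcd_pos_of_pos_right _ (Nat.pos_of_ne_zero (NeZero.ne n))
  have hg1 : Nat.gcd v.val n = 1 := le_antisymm h hgpos
  exfalso
  have hdvd : n ∣ v.val * y.val := (zmod_mul_eq_zero_iff v y).1 hxy
  have hcop : Nat.Coprime n v.val := (Nat.coprime_comm.mp hg1)
  have : n ∣ y.val := hcop.dvd_of_dvd_mul_left hdvd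
  have : y.val = 0 := Nat.eq_zero_of_dvd_of_lt this (ZMod.val_lt y)
  exact hy0 ((ZMod.val_eq_zero y).1 this)

end Basic

def GoodV (n : ℕ) (v : ZMod n) : Prop :=
  ∃ x y : ZMod n, x ∈ zdvSet (ZMod n) ∧ y ∈ zdvSet (ZMod n) ∧
    x ≠ y ∧ x ≠ v ∧ y ≠ v ∧ v * x ≠ 0 ∧ v * y ≠ 0

section Cand

variable {p q a b n : ℕ}

lemma cand_facts (hp : p.Prime) (hq : q.Prime) (ha : 1 ≤ a) (hb : 1 ≤ b)
    (hn : n = p ^ a * q ^ b) [NeZero n]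
    (v : ZMod n) {e : ℕ} (hkill : ∀ x : ZMod n, v * x = 0 → e ∣ x.val)
    (s k : ℕ) (hs1 : 1 ≤ s) (hsb : s ≤ b)
    (hk0 : 0 < k) (hlt : k * q ^ s < n) (hke : ¬ e ∣ k * q ^ s) :
    ((k * q ^ s : ℕ) : ZMod n) ∈ zdvSet (ZMod n) ∧
    ((k * q ^ s : ℕ) : ZMod n).val = k * q ^ s ∧
    v * ((k * q ^ s : ℕ) : ZMod n) ≠ 0 := by
  have hval : ((k * q ^ s : ℕ) : ZMod n).val = k * q ^ s := ZMod.val_cast_of_lt hlt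
  have hq1 : 1 < q := hq.one_lt
  have hp1 : 1 < p := hp.one_lt
  have hqs : 0 < q ^ s := pow_pos hq.pos s
  have hmem : ((k * q ^ s : ℕ) : ZMod n) ∈ zdvSet (ZMod n) := by
    refine natCast_mem_zdv (p ^ a * q ^ (b - s)) (by positivity) hlt (by positivity) ?_ ?_
    · rw [hn]
      have h2 : q ^ (b - s) < q ^ b := Nat.pow_lt_pow_right hq1 (by omega)
      have h3 : 0 < p ^ a := pow_pos hp.pos a
      gcongr
    · refine ⟨k, ?_⟩
      rw [hn]
      have : q ^ s * q ^ (b - s) = q ^ b := by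
        rw [← pow_add]; congr 1; omega
      calc k * q ^ s * (p ^ a * q ^ (b - s))
          = p ^ a * (q ^ s * q ^ (b - s)) * k := by ring
        _ = p ^ a * q ^ b * k := by rw [this]
  refine ⟨hmem, hval, fun h0 => ?_⟩
  exact hke (hval ▸ hkill _ h0)

lemma case_C2 (hp : p.Prime) (hq : q.Prime) (hpq : p ≠ q) (ha : 1 ≤ a) (hb : 1 ≤ b)
    (hn : n = p ^ a * q ^ b) [NeZero n]
    (v : ZMod n) {e : ℕ} (hkill : ∀ x : ZMod n, v * x = 0 → e ∣ x.val)
    (hpe : p ∣ e) (hpv : p ∣ v.val)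
    (c : ℕ) (hc1 : 1 < c) (hcp : ¬ p ∣ c) (hclt : c * q ^ b < n) :
    GoodV n v := by
  have hpqb : ¬ p ∣ q ^ b := fun h =>
    hpq ((Nat.prime_dvd_prime_iff_eq hp hq).1 (hp.dvd_of_dvd_pow h))
  have hqb1 : 1 < q ^ b := Nat.one_lt_pow (by omega : b ≠ 0) hq.one_lt
  have h1lt : 1 * q ^ b < n := lt_of_le_of_lt (Nat.mul_le_mul_right _ (by omega : 1 ≤ c)) hclt
  obtain ⟨m1, mv1, mk1⟩ := cand_facts hp hq ha hb hn v hkill b 1 hb le_rfl one_pos h1lt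
    (fun h => hpqb (dvd_trans hpe (by simpa using h)))
  obtain ⟨m2, mv2, mk2⟩ := cand_facts hp hq ha hb hn v hkill b c hb le_rfl (by omega) hclt
    (fun h => by
      have : p ∣ c * q ^ b := dvd_trans hpe h
      rcases (Nat.Prime.dvd_mul hp).1 this with h' | h'
      · exact hcp h'
      · exact hpqb h')
  have hqs : 0 < q ^ b := pow_pos hq.pos b
  refine ⟨_, _, m1, m2, ?_, ?_, ?_, mk1, mk2⟩
  · intro h
    have := congrArg ZMod.val h
    rw [mv1, mv2] at this
    have : 1 = c := Nat.eq_of_mul_eq_mul_right hqs this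
    omega
  · intro h
    have := congrArg ZMod.val h
    rw [mv1] at this
    rw [← this] at hpv
    rcases (Nat.Prime.dvd_mul hp).1 hpv with h' | h'
    · have := Nat.dvd_one.1 h'; have := hp.one_lt; omega
    · exact hpqb h'
  · intro h
    have := congrArg ZMod.val h
    rw [mv2] at this
    rw [← this] at hpv
    rcases (Nat.Prime.dvd_mul hp).1 hpv with h' | h'
    · exact hcp h'
    · exact hpqb h'

end Cand

lemma pick_two {n : ℕ} (v x1 x2 x3 : ZMod n)
    (m1 : x1 ∈ zdvSet (ZMod n)) (m2 : x2 ∈ zdvSet (ZMod n)) (m3 : x3 ∈ zdvSet (ZMod n))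
    (k1 : v * x1 ≠ 0) (k2 : v * x2 ≠ 0) (k3 : v * x3 ≠ 0)
    (d12 : x1 ≠ x2) (d13 : x1 ≠ x3) (d23 : x2 ≠ x3) : GoodV n v := by
  by_cases h1 : x1 = v
  · exact ⟨x2, x3, m2, m3, d23, fun h => d12 (h1.trans h.symm),
      fun h => d13 (h1.trans h.symm), k2, k3⟩
  by_cases h2 : x2 = v
  · exact ⟨x1, x3, m1, m3, d13, h1, fun h => d23 (h2.trans h.symm), k1, k3⟩
  exact ⟨x1, x2, m1, m2, d12, h1, h2, k1, k2⟩

lemma case_C3 {p q a b n : ℕ} (hp : p.Prime) (hq : q.Prime) (hpq : p ≠ q)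
    (ha : 1 ≤ a) (hb : 1 ≤ b) (hn : n = p ^ a * q ^ b) [NeZero n]
    (v : ZMod n) {e : ℕ} (hkill : ∀ x : ZMod n, v * x = 0 → e ∣ x.val)
    (hea : p ^ a ∣ e) (hbig : 4 ≤ p ^ a ∨ 2 ≤ b) :
    GoodV n v := by
  have hq1 : 1 < q := hq.one_lt
  have hp1 : 1 < p := hp.one_lt
  have hcop : Nat.Coprime (p ^ a) (q ^ b) :=
    Nat.Coprime.pow _ _ ((Nat.coprime_primes hp hq).2 hpq)
  have distinct : ∀ (s k k' : ℕ), k < k' → 0 < q ^ s →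
      ((k * q ^ s : ℕ) : ZMod n) = ((k' * q ^ s : ℕ) : ZMod n) →
      k * q ^ s < n → k' * q ^ s < n → False := by
    intro s k k' hkk hqs h hlt hlt'
    have := congrArg ZMod.val h
    rw [ZMod.val_cast_of_lt hlt, ZMod.val_cast_of_lt hlt'] at this
    have : k = k' := Nat.eq_of_mul_eq_mul_right hqs this
    omega
  rcases hbig with hbig | hbig
  · -- candidates q^b, 2q^b, 3q^b
    have hke : ∀ k : ℕ, 0 < k → k ≤ 3 → ¬ e ∣ k * q ^ b := by
      intro k hk0 hk3 h
      have h2 : p ^ a ∣ k * q ^ b := dvd_trans hea h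
      have h3 : p ^ a ∣ k := hcop.dvd_of_dvd_mul_right h2
      have := Nat.le_of_dvd hk0 h3
      omega
    have hlt : ∀ k : ℕ, k ≤ 3 → k * q ^ b < n := by
      intro k hk3
      rw [hn]
      have h1 : k < p ^ a := by omega
      have h2 : 0 < q ^ b := pow_pos hq.pos b
      exact Nat.mul_lt_mul_of_lt_of_le h1 le_rfl h2
    obtain ⟨m1, mv1, mk1⟩ := cand_facts hp hq ha hb hn v hkill b 1 hb le_rfl one_pos
      (hlt 1 (by omega)) (hke 1 one_pos (by omega))
    obtain ⟨m2, mv2, mk2⟩ := cand_facts hp hq ha hb hn v hkill b 2 hb le_rfl two_pos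
      (hlt 2 (by omega)) (hke 2 two_pos (by omega))
    obtain ⟨m3, mv3, mk3⟩ := cand_facts hp hq ha hb hn v hkill b 3 hb le_rfl three_pos
      (hlt 3 (by omega)) (hke 3 three_pos (by omega))
    have hqs : 0 < q ^ b := pow_pos hq.pos b
    exact pick_two v _ _ _ m1 m2 m3 mk1 mk2 mk3
      (fun h => distinct b 1 2 (by omega) hqs h (hlt 1 (by omega)) (hlt 2 (by omega)))
      (fun h => distinct b 1 3 (by omega) hqs h (hlt 1 (by omega)) (hlt 3 (by omega)))
      (fun h => distinct b 2 3 (by omega) hqs h (hlt 2 (by omega)) (hlt 3 (by omega)))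
  · -- b ≥ 2; candidates k*q for k ∈ {1, c, c+2}
    set c : ℕ := if p = 2 then 3 else 2 with hc
    have hpc : ¬ p ∣ c ∧ ¬ p ∣ (c + 2) ∧ ¬ p ∣ 1 := by
      by_cases h2 : p = 2
      · subst h2
        have hc3 : c = 3 := by rw [hc]; norm_num
        rw [hc3]
        refine ⟨by omega, by omega, by omega⟩
      · have h3 : 3 ≤ p := by rcases hp.eq_one_or_self_of_dvd 1 (by omega) with h | h <;> omega
        rw [hc, if_neg h2]
        refine ⟨fun h => ?_, fun h => ?_, fun h => ?_⟩
        · have := Nat.le_of_dvd (by omega) h; omega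
        · have : p ∣ 2 * 2 := by norm_num at h ⊢; omega
          rcases (Nat.Prime.dvd_mul hp).1 this with h' | h' <;>
            (have := Nat.le_of_dvd (by omega) h'; omega)
        · have := Nat.le_of_dvd (by omega) h; omega
    have hpe : p ∣ e := dvd_trans (dvd_pow_self p (by omega)) hea
    have hke : ∀ k : ℕ, ¬ p ∣ k → ¬ e ∣ k * q ^ 1 := by
      intro k hpk h
      have h2 : p ∣ k * q ^ 1 := dvd_trans hpe h
      rcases (Nat.Prime.dvd_mul hp).1 h2 with h' | h'
      · exact hpk h'
      · rw [pow_one] at h'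
        exact hpq ((Nat.prime_dvd_prime_iff_eq hp hq).1 h')
    have hqlow : q * q ≤ q ^ b := by
      calc q * q = q ^ 2 := (sq q).symm
        _ ≤ q ^ b := Nat.pow_le_pow_right hq.pos hbig
    have hplow : p ≤ p ^ a := Nat.le_self_pow (by omega) p
    have hnlow : p * (q * q) ≤ n := by
      rw [hn]; exact Nat.mul_le_mul hplow hqlow
    have hlt : ∀ k : ℕ, k ≤ c + 2 → k * q ^ 1 < n := by
      intro k hk
      rw [pow_one]
      refine lt_of_lt_of_le ?_ hnlow
      by_cases h2 : p = 2
      · have hq3 : 3 ≤ q := by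
          rcases hq.eq_one_or_self_of_dvd 1 (by omega) with h | h
          · omega
          · have : q ≠ 2 := fun hh => hpq (by omega)
            have := hq.two_le; omega
        have hk5 : k ≤ 5 := by simp [hc, h2] at hk; omega
        have h2' : p = 2 := h2
        nlinarith
      · have h3 : 3 ≤ p := by
          have := hp.two_le; rcases Nat.lt_or_ge p 3 with h | h
          · interval_cases p <;> simp_all
          · exact h
        have hk4 : k ≤ 4 := by simp [hc, h2] at hk; omega
        have hq2 : 2 ≤ q := hq.two_le
        nlinarith
    have hc2 : 2 ≤ c := by by_cases h2 : p = 2 <;> simp [hc, h2]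
    obtain ⟨m1, mv1, mk1⟩ := cand_facts hp hq ha hb hn v hkill 1 1 le_rfl (by omega) one_pos
      (hlt 1 (by omega)) (hke 1 hpc.2.2)
    obtain ⟨m2, mv2, mk2⟩ := cand_facts hp hq ha hb hn v hkill 1 c le_rfl (by omega) (by omega)
      (hlt c (by omega)) (hke c hpc.1)
    obtain ⟨m3, mv3, mk3⟩ := cand_facts hp hq ha hb hn v hkill 1 (c + 2) le_rfl (by omega)
      (by omega) (hlt (c + 2) le_rfl) (hke (c + 2) hpc.2.1)
    have hqs : 0 < q ^ 1 := pow_pos hq.pos 1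
    exact pick_two v _ _ _ m1 m2 m3 mk1 mk2 mk3
      (fun h => distinct 1 1 c (by omega) hqs h (hlt 1 (by omega)) (hlt c (by omega)))
      (fun h => distinct 1 1 (c + 2) (by omega) hqs h (hlt 1 (by omega)) (hlt (c + 2) le_rfl))
      (fun h => distinct 1 c (c + 2) (by omega) hqs h (hlt c (by omega)) (hlt (c + 2) le_rfl))

lemma full_pow_of_not_mul_dvd {p q a b n e : ℕ} (hp : p.Prime)
    (hn : n = p ^ a * q ^ b) (hen : e ∣ n) (hne : ¬ p * e ∣ n) : p ^ a ∣ e := by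
  rw [hn] at hen
  obtain ⟨y, z, hy, hz, hyz⟩ := Nat.dvd_mul.1 hen
  obtain ⟨i, hia, hyi⟩ := (Nat.dvd_prime_pow hp).1 hy
  by_cases hia' : i < a
  · exfalso; apply hne
    rw [hn, ← hyz, hyi]
    have heq : p * (p ^ i * z) = p ^ (i + 1) * z := by ring
    rw [heq]
    exact mul_dvd_mul (pow_dvd_pow p (by omega)) hz
  · have hai : a ≤ i := by omega
    calc p ^ a ∣ p ^ i := pow_dvd_pow p hai
      _ = y := hyi.symm
      _ ∣ e := hyz ▸ dvd_mul_right y z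

lemma c_spec {p a : ℕ} (hp : p.Prime) (ha : 1 ≤ a) (h2 : p = 2 → 2 ≤ a) :
    1 < (if p = 2 then 3 else 2) ∧ ¬ p ∣ (if p = 2 then 3 else 2) ∧
      (if p = 2 then 3 else 2) < p ^ a := by
  by_cases hp2 : p = 2
  · subst hp2; rw [if_pos rfl]
    refine ⟨by omega, by omega, ?_⟩
    have h4 : 4 ≤ 2 ^ a := by
      calc (4 : ℕ) = 2 ^ 2 := rfl
        _ ≤ 2 ^ a := Nat.pow_le_pow_right (by omega) (h2 rfl)
    omega
  · rw [if_neg hp2]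
    have h3 : 3 ≤ p := by have := hp.two_le; omega
    refine ⟨by omega, fun h => by have := Nat.le_of_dvd (by omega) h; omega, ?_⟩
    calc 2 < 3 := by omega
      _ ≤ p := h3
      _ ≤ p ^ a := Nat.le_self_pow (by omega) p

lemma good_all {p q a b n : ℕ} (hp : p.Prime) (hq : q.Prime) (hpq : p ≠ q)
    (ha : 1 ≤ a) (hb : 1 ≤ b)
    (hcase : 2 ≤ a ∨ 2 ≤ b ∨ (a = 1 ∧ b = 1 ∧ 5 ≤ p ∧ 5 ≤ q))
    (hn : n = p ^ a * q ^ b) [NeZero n]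
    (v : ZMod n) (hv : v ∈ zdvSet (ZMod n)) : GoodV n v := by
  have hnpos : 0 < n := Nat.pos_of_ne_zero (NeZero.ne n)
  set d := Nat.gcd v.val n with hd
  have hd1 : 1 < d := one_lt_gcd_of_mem hv
  have hdn : d ∣ n := Nat.gcd_dvd_right _ _
  have hdv : d ∣ v.val := Nat.gcd_dvd_left _ _
  have hvpos : 0 < v.val := ZMod.val_pos.2 hv.1
  have hdlt : d < n := lt_of_le_of_lt (Nat.le_of_dvd hvpos hdv) (ZMod.val_lt v)
  set e := n / d with he
  have hde : d * e = n := Nat.mul_div_cancel' hdn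
  have hen : e ∣ n := Nat.div_dvd_of_dvd hdn
  have he1 : 1 < e := by
    rcases Nat.lt_or_ge e 2 with h | h
    · interval_cases e <;> omega
    · omega
  have hkill : ∀ x : ZMod n, v * x = 0 → e ∣ x.val := by
    intro x hx
    have hmul : n ∣ v.val * x.val := (zmod_mul_eq_zero_iff v x).1 hx
    set w := v.val / d with hw
    have hwv : d * w = v.val := Nat.mul_div_cancel' hdv
    have hcop : Nat.Coprime e w := by
      have := Nat.coprime_div_gcd_div_gcd (m := v.val) (n := n) (by omega)
      exact this.symm
    have h2 : d * e ∣ d * (w * x.val) := by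
      rw [hde]
      calc n ∣ v.val * x.val := hmul
        _ = d * (w * x.val) := by rw [← hwv]; ring
    have h3 : e ∣ w * x.val := (mul_dvd_mul_iff_left (by omega : d ≠ 0)).1 h2
    exact hcop.dvd_of_dvd_mul_left h3
  have hqbpos : 0 < q ^ b := pow_pos hq.pos b
  have hpapos : 0 < p ^ a := pow_pos hp.pos a
  by_cases h1 : p ∣ e ∧ p * e ∣ n
  · -- C2 on p side
    obtain ⟨hpe, hpen⟩ := h1
    have hpd : p ∣ d := by
      have h2 : p * e ∣ d * e := by rw [hde]; exact hpen
      exact (mul_dvd_mul_iff_right (by omega : e ≠ 0)).1 h2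
    have hpv : p ∣ v.val := dvd_trans hpd hdv
    have ha2 : p = 2 → 2 ≤ a := by
      intro hp2
      have h4 : p * p ∣ n := by
        calc p * p ∣ p * e := mul_dvd_mul_left p hpe
          _ ∣ n := hpen
      rw [hn] at h4
      have hcop : Nat.Coprime (p * p) (q ^ b) := by
        have : Nat.Coprime p q := (Nat.coprime_primes hp hq).2 hpq
        exact Nat.Coprime.mul (this.pow_right b) (this.pow_right b)
      have h5 : p * p ∣ p ^ a := hcop.dvd_of_dvd_mul_right h4
      by_contra hcon
      have ha1 : a = 1 := by omega
      rw [ha1, pow_one] at h5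
      have := Nat.le_of_dvd hp.pos h5
      nlinarith [hp.two_le]
    obtain ⟨hc1, hcp, hclt⟩ := c_spec hp ha ha2
    refine case_C2 hp hq hpq ha hb hn v hkill hpe hpv _ hc1 hcp ?_
    rw [hn]
    exact Nat.mul_lt_mul_of_lt_of_le hclt le_rfl hqbpos
  by_cases h2 : q ∣ e ∧ q * e ∣ n
  · -- C2 on q side (swap roles)
    obtain ⟨hqe, hqen⟩ := h2
    have hn' : n = q ^ b * p ^ a := by rw [hn, mul_comm]
    have hqd : q ∣ d := by
      have h2' : q * e ∣ d * e := by rw [hde]; exact hqen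
      exact (mul_dvd_mul_iff_right (by omega : e ≠ 0)).1 h2'
    have hqv : q ∣ v.val := dvd_trans hqd hdv
    have hb2 : q = 2 → 2 ≤ b := by
      intro hq2
      have h4 : q * q ∣ n := by
        calc q * q ∣ q * e := mul_dvd_mul_left q hqe
          _ ∣ n := hqen
      rw [hn'] at h4
      have hcop : Nat.Coprime (q * q) (p ^ a) := by
        have : Nat.Coprime q p := (Nat.coprime_primes hq hp).2 (Ne.symm hpq)
        exact Nat.Coprime.mul (this.pow_right a) (this.pow_right a)
      have h5 : q * q ∣ q ^ b := hcop.dvd_of_dvd_mul_right h4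
      by_contra hcon
      have hb1 : b = 1 := by omega
      rw [hb1, pow_one] at h5
      have := Nat.le_of_dvd hq.pos h5
      nlinarith [hq.two_le]
    obtain ⟨hc1, hcp, hclt⟩ := c_spec hq hb hb2
    refine case_C2 hq hp (Ne.symm hpq) hb ha hn' v hkill hqe hqv _ hc1 hcp ?_
    rw [hn']
    exact Nat.mul_lt_mul_of_lt_of_le hclt le_rfl hpapos
  by_cases h3 : p ∣ e
  · -- e = p^a case
    have hpen : ¬ p * e ∣ n := fun h => h1 ⟨h3, h⟩
    have hea : p ^ a ∣ e := full_pow_of_not_mul_dvd hp hn hen hpen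
    have hbig : 4 ≤ p ^ a ∨ 2 ≤ b := by
      by_cases h4 : 4 ≤ p ^ a
      · exact Or.inl h4
      · right
        have hpa3 : p ^ a ≤ 3 := by omega
        have hpa : p ≤ p ^ a := Nat.le_self_pow (by omega) p
        have hA : a = 1 := by
          by_contra hcon
          have h5 : 2 ≤ a := by omega
          have : p ^ 2 ≤ p ^ a := Nat.pow_le_pow_right hp.pos h5
          nlinarith [hp.two_le]
        rcases hcase with h | h | h
        · omega
        · exact h
        · omega
    exact case_C3 hp hq hpq ha hb hn v hkill hea hbig
  · -- q ∣ e, e = q^b case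
    have hqe : q ∣ e := by
      obtain ⟨r, hr, hre⟩ := Nat.exists_prime_and_dvd (by omega : e ≠ 1)
      have hrn : r ∣ n := dvd_trans hre hen
      rw [hn] at hrn
      rcases (Nat.Prime.dvd_mul hr).1 hrn with h' | h'
      · exact absurd (((Nat.prime_dvd_prime_iff_eq hr hp).1 (hr.dvd_of_dvd_pow h')) ▸ hre) h3
      · exact ((Nat.prime_dvd_prime_iff_eq hr hq).1 (hr.dvd_of_dvd_pow h')) ▸ hre
    have hn' : n = q ^ b * p ^ a := by rw [hn, mul_comm]
    have hqen : ¬ q * e ∣ n := fun h => h2 ⟨hqe, h⟩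
    have hea : q ^ b ∣ e := full_pow_of_not_mul_dvd hq hn' hen hqen
    have hbig : 4 ≤ q ^ b ∨ 2 ≤ a := by
      by_cases h4 : 4 ≤ q ^ b
      · exact Or.inl h4
      · right
        have hqb3 : q ^ b ≤ 3 := by omega
        have hqb : q ≤ q ^ b := Nat.le_self_pow (by omega) q
        have hB : b = 1 := by
          by_contra hcon
          have h5 : 2 ≤ b := by omega
          have : q ^ 2 ≤ q ^ b := Nat.pow_le_pow_right hq.pos h5
          nlinarith [hq.two_le]
        rcases hcase with h | h | h
        · exact h
        · omega
        · omega
    exact case_C3 hq hp (Ne.symm hpq) hb ha hn' v hkill hea hbig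

def FourV (n : ℕ) : Prop :=
  ∃ x1 x2 x3 x4 : ZMod n, x1 ∈ zdvSet (ZMod n) ∧ x2 ∈ zdvSet (ZMod n) ∧
    x3 ∈ zdvSet (ZMod n) ∧ x4 ∈ zdvSet (ZMod n) ∧
    x1 ≠ x2 ∧ x1 ≠ x3 ∧ x1 ≠ x4 ∧ x2 ≠ x3 ∧ x2 ≠ x4 ∧ x3 ≠ x4

lemma four_of_big {p q a b n : ℕ} (hp : p.Prime) (hq : q.Prime) (hpq : p ≠ q)
    (ha : 1 ≤ a) (hb : 1 ≤ b) (hn : n = p ^ a * q ^ b) [NeZero n]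
    (hbig : 4 ≤ p ^ a) : FourV n := by
  have hqb1 : 1 < q ^ b := Nat.one_lt_pow (by omega : b ≠ 0) hq.one_lt
  have hpa1 : 1 < p ^ a := by omega
  have hqbpos : 0 < q ^ b := by omega
  have hpapos : 0 < p ^ a := by omega
  have hkq : ∀ k : ℕ, 0 < k → k ≤ 3 → k * q ^ b < n := by
    intro k hk0 hk3
    rw [hn]
    exact Nat.mul_lt_mul_of_lt_of_le (by omega) le_rfl hqbpos
  have hpan : p ^ a < n := by
    rw [hn]
    calc p ^ a = p ^ a * 1 := (mul_one _).symm
      _ < p ^ a * q ^ b := by gcongr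
  have hmemk : ∀ k : ℕ, 0 < k → k ≤ 3 → ((k * q ^ b : ℕ) : ZMod n) ∈ zdvSet (ZMod n) := by
    intro k hk0 hk3
    refine natCast_mem_zdv (p ^ a) (by positivity) (hkq k hk0 hk3) hpapos hpan ⟨k, by rw [hn]; ring⟩
  have hmem4 : ((p ^ a : ℕ) : ZMod n) ∈ zdvSet (ZMod n) :=
    natCast_mem_zdv (q ^ b) hpapos hpan hqbpos (by
      rw [hn]
      calc q ^ b = 1 * q ^ b := (one_mul _).symm
        _ < p ^ a * q ^ b := by gcongr) ⟨1, by rw [hn]; ring⟩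
  have hvalk : ∀ k : ℕ, 0 < k → k ≤ 3 → ((k * q ^ b : ℕ) : ZMod n).val = k * q ^ b :=
    fun k hk0 hk3 => ZMod.val_cast_of_lt (hkq k hk0 hk3)
  have hval4 : ((p ^ a : ℕ) : ZMod n).val = p ^ a := ZMod.val_cast_of_lt hpan
  have hqpa : ¬ q ∣ p ^ a := fun h =>
    hpq (((Nat.prime_dvd_prime_iff_eq hq hp).1 (hq.dvd_of_dvd_pow h))).symm
  have hne4 : ∀ k : ℕ, 0 < k → k ≤ 3 → ((k * q ^ b : ℕ) : ZMod n) ≠ ((p ^ a : ℕ) : ZMod n) := by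
    intro k hk0 hk3 h
    have := congrArg ZMod.val h
    rw [hvalk k hk0 hk3, hval4] at this
    exact hqpa (this ▸ Dvd.dvd.mul_left (dvd_pow_self q (by omega : b ≠ 0)) k)
  have hnekk : ∀ k k' : ℕ, 0 < k → k ≤ 3 → 0 < k' → k' ≤ 3 → k < k' →
      ((k * q ^ b : ℕ) : ZMod n) ≠ ((k' * q ^ b : ℕ) : ZMod n) := by
    intro k k' hk0 hk3 hk0' hk3' hkk h
    have := congrArg ZMod.val h
    rw [hvalk k hk0 hk3, hvalk k' hk0' hk3'] at this
    have := Nat.eq_of_mul_eq_mul_right hqbpos this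
    omega
  exact ⟨_, _, _, _, hmemk 1 one_pos (by omega), hmemk 2 two_pos (by omega),
    hmemk 3 three_pos (by omega), hmem4,
    hnekk 1 2 one_pos (by omega) two_pos (by omega) (by omega),
    hnekk 1 3 one_pos (by omega) three_pos (by omega) (by omega),
    hne4 1 one_pos (by omega),
    hnekk 2 3 two_pos (by omega) three_pos (by omega) (by omega),
    hne4 2 two_pos (by omega), hne4 3 three_pos (by omega)⟩

lemma four_vertices {p q a b n : ℕ} (hp : p.Prime) (hq : q.Prime) (hpq : p ≠ q)
    (ha : 1 ≤ a) (hb : 1 ≤ b)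
    (hcase : 2 ≤ a ∨ 2 ≤ b ∨ (a = 1 ∧ b = 1 ∧ 5 ≤ p ∧ 5 ≤ q))
    (hn : n = p ^ a * q ^ b) [NeZero n] : FourV n := by
  by_cases h1 : 4 ≤ p ^ a
  · exact four_of_big hp hq hpq ha hb hn h1
  by_cases h2 : 4 ≤ q ^ b
  · exact four_of_big hq hp (Ne.symm hpq) hb ha (by rw [hn, mul_comm]) h2
  exfalso
  have hpa : p ≤ p ^ a := Nat.le_self_pow (by omega) p
  have hqb : q ≤ q ^ b := Nat.le_self_pow (by omega) q
  have ha1 : a = 1 := by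
    by_contra hcon
    have : p ^ 2 ≤ p ^ a := Nat.pow_le_pow_right hp.pos (by omega)
    nlinarith [hp.two_le]
  have hb1 : b = 1 := by
    by_contra hcon
    have : q ^ 2 ≤ q ^ b := Nat.pow_le_pow_right hq.pos (by omega)
    nlinarith [hq.two_le]
  rcases hcase with h | h | h <;> omega

lemma p_or_q_dvd {p q a b n : ℕ} (hp : p.Prime) (hq : q.Prime)
    (hn : n = p ^ a * q ^ b) [NeZero n] (x : ZMod n) (hx : x ∈ zdvSet (ZMod n)) :
    p ∣ x.val ∨ q ∣ x.val := by
  have h := one_lt_gcd_of_mem hx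
  obtain ⟨r, hr, hrd⟩ := Nat.exists_prime_and_dvd (by omega : Nat.gcd x.val n ≠ 1)
  have hrx : r ∣ x.val := hrd.trans (Nat.gcd_dvd_left _ _)
  have hrn : r ∣ n := hrd.trans (Nat.gcd_dvd_right _ _)
  rw [hn] at hrn
  rcases (Nat.Prime.dvd_mul hr).1 hrn with h' | h'
  · exact Or.inl (((Nat.prime_dvd_prime_iff_eq hr hp).1 (hr.dvd_of_dvd_pow h')) ▸ hrx)
  · exact Or.inr (((Nat.prime_dvd_prime_iff_eq hr hq).1 (hr.dvd_of_dvd_pow h')) ▸ hrx)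

lemma upper_bound {p q a b n : ℕ} (hp : p.Prime) (hq : q.Prime) (hpq : p ≠ q)
    (ha : 1 ≤ a) (hb : 1 ≤ b) (hn : n = p ^ a * q ^ b) [NeZero n] :
    ∃ f : (zdvSet (ZMod n)) → Fin 3, IsRomanDominating (zeroDivisorGraph (ZMod n)) f ∧
      {v | f v ≠ 0}.Finite ∧ (∑ᶠ v, ((f v : ℕ))) = 4 := by
  classical
  have hpsucc : p ^ (a - 1) * p = p ^ a := by
    rw [← pow_succ]; congr 1; omega
  have hqsucc : q ^ (b - 1) * q = q ^ b := by
    rw [← pow_succ]; congr 1; omega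
  have hqb1 : 1 < q ^ b := Nat.one_lt_pow (by omega : b ≠ 0) hq.one_lt
  have hpa1 : 1 < p ^ a := Nat.one_lt_pow (by omega : a ≠ 0) hp.one_lt
  have hppos := hp.pos
  have hqpos := hq.pos
  have hApos : 0 < p ^ (a - 1) * q ^ b := by positivity
  have hBpos : 0 < p ^ a * q ^ (b - 1) := by positivity
  have hAlt : p ^ (a - 1) * q ^ b < n := by
    rw [hn]
    have : p ^ (a - 1) < p ^ a := Nat.pow_lt_pow_right hp.one_lt (by omega)
    exact Nat.mul_lt_mul_of_lt_of_le this le_rfl (by positivity)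
  have hBlt : p ^ a * q ^ (b - 1) < n := by
    rw [hn]
    have h2 : q ^ (b - 1) < q ^ b := Nat.pow_lt_pow_right hq.one_lt (by omega)
    have h3 : 0 < p ^ a := by positivity
    gcongr
  have hpltn : p < n := by
    rw [hn]
    calc p ≤ p ^ a := Nat.le_self_pow (by omega) p
      _ = p ^ a * 1 := (mul_one _).symm
      _ < p ^ a * q ^ b := by gcongr
  have hqltn : q < n := by
    rw [hn]
    calc q ≤ q ^ b := Nat.le_self_pow (by omega) q
      _ = 1 * q ^ b := (one_mul _).symm
      _ < p ^ a * q ^ b := by gcongr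
  set A : ZMod n := ((p ^ (a - 1) * q ^ b : ℕ) : ZMod n) with hA
  set B : ZMod n := ((p ^ a * q ^ (b - 1) : ℕ) : ZMod n) with hB
  have memA : A ∈ zdvSet (ZMod n) := by
    refine natCast_mem_zdv p hApos hAlt hppos hpltn ⟨1, ?_⟩
    rw [hn, mul_one]
    calc p ^ (a - 1) * q ^ b * p = (p ^ (a - 1) * p) * q ^ b := by ring
      _ = p ^ a * q ^ b := by rw [hpsucc]
  have memB : B ∈ zdvSet (ZMod n) := by
    refine natCast_mem_zdv q hBpos hBlt hqpos hqltn ⟨1, ?_⟩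
    rw [hn, mul_one]
    calc p ^ a * q ^ (b - 1) * q = p ^ a * (q ^ (b - 1) * q) := by ring
      _ = p ^ a * q ^ b := by rw [hqsucc]
  have hvalA : A.val = p ^ (a - 1) * q ^ b := ZMod.val_cast_of_lt hAlt
  have hvalB : B.val = p ^ a * q ^ (b - 1) := ZMod.val_cast_of_lt hBlt
  have hAB : A ≠ B := by
    intro h
    have h1 := congrArg ZMod.val h
    rw [hvalA, hvalB] at h1
    have h2 : q * (p ^ (a - 1) * q ^ (b - 1)) = p * (p ^ (a - 1) * q ^ (b - 1)) := by
      calc q * (p ^ (a - 1) * q ^ (b - 1)) = p ^ (a - 1) * (q ^ (b - 1) * q) := by ring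
        _ = p ^ (a - 1) * q ^ b := by rw [hqsucc]
        _ = p ^ a * q ^ (b - 1) := h1
        _ = (p ^ (a - 1) * p) * q ^ (b - 1) := by rw [hpsucc]
        _ = p * (p ^ (a - 1) * q ^ (b - 1)) := by ring
    have h3 : q = p := Nat.eq_of_mul_eq_mul_right (by positivity) h2
    exact hpq h3.symm
  set f : (zdvSet (ZMod n)) → Fin 3 :=
    fun u => if (u : ZMod n) = A ∨ (u : ZMod n) = B then 2 else 0 with hf
  have fA : f ⟨A, memA⟩ = 2 := if_pos (Or.inl rfl)
  have fB : f ⟨B, memB⟩ = 2 := if_pos (Or.inr rfl)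
  refine ⟨f, ?_, Set.toFinite _, ?_⟩
  · intro u hu
    have hnotor : ¬ ((u : ZMod n) = A ∨ (u : ZMod n) = B) := by
      intro h
      rw [hf] at hu
      simp only [if_pos h] at hu
      exact absurd hu (by decide)
    push_neg at hnotor
    rcases p_or_q_dvd hp hq hn (u : ZMod n) u.2 with hdvd | hdvd
    · refine ⟨⟨A, memA⟩, ⟨?_, ?_⟩, fA⟩
      · intro h; exact hnotor.1 (congrArg Subtype.val h)
      · show (u : ZMod n) * A = 0
        obtain ⟨t, ht⟩ := hdvd
        have h0 : (((ZMod.val (u : ZMod n)) * (p ^ (a - 1) * q ^ b) : ℕ) : ZMod n) = 0 := by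
          rw [ZMod.natCast_eq_zero_iff]
          refine ⟨t, ?_⟩
          rw [ht, hn]
          calc p * t * (p ^ (a - 1) * q ^ b) = (p ^ (a - 1) * p) * q ^ b * t := by ring
            _ = p ^ a * q ^ b * t := by rw [hpsucc]
        calc (u : ZMod n) * A
            = ((ZMod.val (u : ZMod n) : ℕ) : ZMod n) * ((p ^ (a - 1) * q ^ b : ℕ) : ZMod n) := by
              rw [ZMod.natCast_zmod_val]
          _ = (((ZMod.val (u : ZMod n)) * (p ^ (a - 1) * q ^ b) : ℕ) : ZMod n) :=
              (Nat.cast_mul _ _).symm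
          _ = 0 := h0
    · refine ⟨⟨B, memB⟩, ⟨?_, ?_⟩, fB⟩
      · intro h; exact hnotor.2 (congrArg Subtype.val h)
      · show (u : ZMod n) * B = 0
        obtain ⟨t, ht⟩ := hdvd
        have h0 : (((ZMod.val (u : ZMod n)) * (p ^ a * q ^ (b - 1)) : ℕ) : ZMod n) = 0 := by
          rw [ZMod.natCast_eq_zero_iff]
          refine ⟨t, ?_⟩
          rw [ht, hn]
          calc q * t * (p ^ a * q ^ (b - 1)) = p ^ a * (q ^ (b - 1) * q) * t := by ring
            _ = p ^ a * q ^ b * t := by rw [hqsucc]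
        calc (u : ZMod n) * B
            = ((ZMod.val (u : ZMod n) : ℕ) : ZMod n) * ((p ^ a * q ^ (b - 1) : ℕ) : ZMod n) := by
              rw [ZMod.natCast_zmod_val]
          _ = (((ZMod.val (u : ZMod n)) * (p ^ a * q ^ (b - 1)) : ℕ) : ZMod n) :=
              (Nat.cast_mul _ _).symm
          _ = 0 := h0
  · haveI : Fintype (zdvSet (ZMod n)) := Fintype.ofFinite _
    rw [finsum_eq_sum_of_fintype]
    have hsub : ({⟨A, memA⟩, ⟨B, memB⟩} : Finset (zdvSet (ZMod n))) ⊆ Finset.univ :=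
      Finset.subset_univ _
    rw [← Finset.sum_subset hsub]
    · have hne : (⟨A, memA⟩ : zdvSet (ZMod n)) ≠ ⟨B, memB⟩ := by
        intro h; exact hAB (congrArg Subtype.val h)
      rw [Finset.sum_pair hne, fA, fB]
      decide
    · intro x _ hx
      simp only [Finset.mem_insert, Finset.mem_singleton] at hx
      push_neg at hx
      have h1 : (x : ZMod n) ≠ A := fun h => hx.1 (Subtype.ext h)
      have h2 : (x : ZMod n) ≠ B := fun h => hx.2 (Subtype.ext h)
      rw [hf]
      simp only [if_neg (by tauto : ¬ ((x : ZMod n) = A ∨ (x : ZMod n) = B))]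
      rfl

lemma fin3_one_le {x : Fin 3} (h : x ≠ 0) : 1 ≤ (x : ℕ) := by
  by_contra hc
  exact h (Fin.ext (by omega))

lemma lower_bound {p q a b n : ℕ} (hp : p.Prime) (hq : q.Prime) (hpq : p ≠ q)
    (ha : 1 ≤ a) (hb : 1 ≤ b)
    (hcase : 2 ≤ a ∨ 2 ≤ b ∨ (a = 1 ∧ b = 1 ∧ 5 ≤ p ∧ 5 ≤ q))
    (hn : n = p ^ a * q ^ b) [NeZero n]
    (w : ℕ) (f : (zdvSet (ZMod n)) → Fin 3)
    (hRD : IsRomanDominating (zeroDivisorGraph (ZMod n)) f)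
    (hw : w = ∑ᶠ v, ((f v : ℕ))) : 4 ≤ w := by
  classical
  haveI : Fintype (zdvSet (ZMod n)) := Fintype.ofFinite _
  rw [finsum_eq_sum_of_fintype] at hw
  by_cases h2 : ∃ u, f u = 2
  · obtain ⟨u2, hu2⟩ := h2
    by_cases h3 : ∃ u', u' ≠ u2 ∧ f u' = 2
    · obtain ⟨u', hne, hu'⟩ := h3
      have hsub : ({u2, u'} : Finset (zdvSet (ZMod n))) ⊆ Finset.univ := Finset.subset_univ _
      have hle : ∑ v ∈ ({u2, u'} : Finset (zdvSet (ZMod n))), ((f v : ℕ)) ≤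
          ∑ v, ((f v : ℕ)) := Finset.sum_le_sum_of_subset hsub
      rw [Finset.sum_pair (Ne.symm hne), hu2, hu'] at hle
      omega
    · have huniq : ∀ z, f z = 2 → z = u2 := by
        intro z hz
        by_contra hne
        exact h3 ⟨z, hne, hz⟩
      obtain ⟨x, y, hx, hy, hxy, hxv, hyv, hk1, hk2⟩ :=
        good_all hp hq hpq ha hb hcase hn (u2 : ZMod n) u2.2
      set X : (zdvSet (ZMod n)) := ⟨x, hx⟩ with hX
      set Y : (zdvSet (ZMod n)) := ⟨y, hy⟩ with hY
      have hXu2 : X ≠ u2 := fun h => hxv (congrArg Subtype.val h)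
      have hYu2 : Y ≠ u2 := fun h => hyv (congrArg Subtype.val h)
      have hXY : X ≠ Y := fun h => hxy (congrArg Subtype.val h)
      have hfX : f X ≠ 0 := by
        intro h0
        obtain ⟨z, hadj, hz2⟩ := hRD X h0
        have hzu2 : z = u2 := huniq z hz2
        subst hzu2
        exact hk1 (by rw [mul_comm]; exact hadj.2)
      have hfY : f Y ≠ 0 := by
        intro h0
        obtain ⟨z, hadj, hz2⟩ := hRD Y h0
        have hzu2 : z = u2 := huniq z hz2
        subst hzu2
        exact hk2 (by rw [mul_comm]; exact hadj.2)
      have hsub : ({u2, X, Y} : Finset (zdvSet (ZMod n))) ⊆ Finset.univ := Finset.subset_univ _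
      have hle : ∑ v ∈ ({u2, X, Y} : Finset (zdvSet (ZMod n))), ((f v : ℕ)) ≤
          ∑ v, ((f v : ℕ)) := Finset.sum_le_sum_of_subset hsub
      have hnm1 : u2 ∉ ({X, Y} : Finset (zdvSet (ZMod n))) := by
        simp only [Finset.mem_insert, Finset.mem_singleton]
        push_neg
        exact ⟨Ne.symm hXu2, Ne.symm hYu2⟩
      have hnm2 : X ∉ ({Y} : Finset (zdvSet (ZMod n))) := by
        simp only [Finset.mem_singleton]; exact hXY
      rw [Finset.sum_insert hnm1, Finset.sum_insert hnm2, Finset.sum_singleton, hu2] at hle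
      have l1 := fin3_one_le hfX
      have l2 := fin3_one_le hfY
      have : ((2 : Fin 3) : ℕ) = 2 := rfl
      omega
  · have hall : ∀ u : (zdvSet (ZMod n)), 1 ≤ ((f u : ℕ)) := by
      intro u
      apply fin3_one_le
      intro h0
      obtain ⟨z, _, hz2⟩ := hRD u h0
      exact h2 ⟨z, hz2⟩
    obtain ⟨x1, x2, x3, x4, m1, m2, m3, m4, d12, d13, d14, d23, d24, d34⟩ :=
      four_vertices hp hq hpq ha hb hcase hn
    set X1 : (zdvSet (ZMod n)) := ⟨x1, m1⟩
    set X2 : (zdvSet (ZMod n)) := ⟨x2, m2⟩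
    set X3 : (zdvSet (ZMod n)) := ⟨x3, m3⟩
    set X4 : (zdvSet (ZMod n)) := ⟨x4, m4⟩
    have D12 : X1 ≠ X2 := fun h => d12 (congrArg Subtype.val h)
    have D13 : X1 ≠ X3 := fun h => d13 (congrArg Subtype.val h)
    have D14 : X1 ≠ X4 := fun h => d14 (congrArg Subtype.val h)
    have D23 : X2 ≠ X3 := fun h => d23 (congrArg Subtype.val h)
    have D24 : X2 ≠ X4 := fun h => d24 (congrArg Subtype.val h)
    have D34 : X3 ≠ X4 := fun h => d34 (congrArg Subtype.val h)
    have hsub : ({X1, X2, X3, X4} : Finset (zdvSet (ZMod n))) ⊆ Finset.univ :=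
      Finset.subset_univ _
    have hle : ∑ v ∈ ({X1, X2, X3, X4} : Finset (zdvSet (ZMod n))), ((f v : ℕ)) ≤
        ∑ v, ((f v : ℕ)) := Finset.sum_le_sum_of_subset hsub
    have hnm1 : X1 ∉ ({X2, X3, X4} : Finset (zdvSet (ZMod n))) := by
      simp only [Finset.mem_insert, Finset.mem_singleton]
      push_neg
      exact ⟨D12, D13, D14⟩
    have hnm2 : X2 ∉ ({X3, X4} : Finset (zdvSet (ZMod n))) := by
      simp only [Finset.mem_insert, Finset.mem_singleton]
      push_neg
      exact ⟨D23, D24⟩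
    have hnm3 : X3 ∉ ({X4} : Finset (zdvSet (ZMod n))) := by
      simp only [Finset.mem_singleton]; exact D34
    rw [Finset.sum_insert hnm1, Finset.sum_insert hnm2, Finset.sum_insert hnm3,
      Finset.sum_singleton] at hle
    have l1 := hall X1
    have l2 := hall X2
    have l3 := hall X3
    have l4 := hall X4
    omega

theorem stmt_12 (p q m₁ m₂ : ℕ) (hp : p.Prime) (hq : q.Prime) (hpq : p ≠ q)
    (hm₁ : 1 ≤ m₁) (hm₂ : 1 ≤ m₂)
    (hcase : 2 ≤ m₁ ∨ 2 ≤ m₂ ∨ (m₁ = 1 ∧ m₂ = 1 ∧ 5 ≤ p ∧ 5 ≤ q))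
    (n : ℕ) (hn : n = p ^ m₁ * q ^ m₂) :
    romanDominationNumber (zeroDivisorGraph (ZMod n)) = 4 := by
  haveI : NeZero n := ⟨by
    rw [hn]
    have := hp.pos
    have := hq.pos
    positivity⟩
  obtain ⟨f, hRD, hfin, hwt⟩ := upper_bound hp hq hpq hm₁ hm₂ hn
  have h4mem : 4 ∈ {w | ∃ f : (zdvSet (ZMod n)) → Fin 3,
      IsRomanDominating (zeroDivisorGraph (ZMod n)) f ∧
      {v | f v ≠ 0}.Finite ∧ w = ∑ᶠ v, ((f v : ℕ))} := ⟨f, hRD, hfin, hwt.symm⟩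
  refine le_antisymm (Nat.sInf_le h4mem) ?_
  refine le_csInf ⟨4, h4mem⟩ ?_
  rintro w ⟨g, hgRD, hgfin, hgw⟩
  exact lower_bound hp hq hpq hm₁ hm₂ hcase hn w g hgRD hgw
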